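/- Let x_1, ..., x_k be distinct real numbers and α ∈ ℝ, and let C be the convex set of probability vectors p with Σ_i x_i p_i = α. A point p ∈ C is an extreme point of C if and only if p has at most two non-zero entries. -/

import Mathlib

/-- A probability vector with mean `α` is an extreme point of the convex set of
all such vectors iff it has at most two non-zero entries. -/
theorem extreme_points_iff_two_nonzero {k : ℕ} (x : Fin (k + 1) → ℝ)
    (hx : Function.Injective x) (α : ℝ) (p : Fin (k + 1) → ℝ)
    (hp : p ∈ {p : Fin (k + 1) → ℝ |
      (∀ i, 0 ≤ p i) ∧ (∑ i, p i = 1) ∧ (∑ i, x i * p i = α)}) :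
    p ∈ Set.extremePoints ℝ {p : Fin (k + 1) → ℝ |
        (∀ i, 0 ≤ p i) ∧ (∑ i, p i = 1) ∧ (∑ i, x i * p i = α)} ↔
      (Finset.univ.filter fun i => p i ≠ 0).card ≤ 2 := by
  obtain ⟨hpos, hsum, hmean⟩ := hp
  rw [mem_extremePoints]
  constructor
  · -- extreme → at most 2 nonzero
    rintro ⟨-, hext⟩
    by_contra hcard
    push_neg at hcard
    rw [Finset.two_lt_card_iff] at hcard
    obtain ⟨i, j, l, hi, hj, hl, hij, hil, hjl⟩ := hcard
    simp only [Finset.mem_filter, Finset.mem_univ, true_and] at hi hj hl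
    set u : ℝ := x j - x l with hu
    set v : ℝ := x l - x i with hv
    set w : ℝ := x i - x j with hwdef
    have hw : w ≠ 0 := sub_ne_zero.mpr (fun h => hij (hx h))
    set e1 : Fin (k+1) → ℝ := Pi.single i u with he1
    set e2 : Fin (k+1) → ℝ := Pi.single j v with he2
    set e3 : Fin (k+1) → ℝ := Pi.single l w with he3
    set d : Fin (k+1) → ℝ := fun m => e1 m + e2 m + e3 m with hd
    have hdl : d l = w := by
      simp [hd, he1, he2, he3, Pi.single_eq_of_ne (Ne.symm hil),
        Pi.single_eq_of_ne (Ne.symm hjl)]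
    have hdsum : ∑ m, d m = 0 := by
      simp only [hd, he1, he2, he3, Finset.sum_add_distrib, Finset.sum_pi_single',
        Finset.mem_univ, if_true]
      ring
    have hdx : ∑ m, x m * d m = 0 := by
      simp only [hd, he1, he2, he3, mul_add, Finset.sum_add_distrib, Pi.single_apply,
        mul_ite, mul_zero, Finset.sum_ite_eq', Finset.mem_univ, if_true]
      ring
    have hdbound : ∀ m, |d m| ≤ |u| + |v| + |w| := by
      intro m
      have h1 : |e1 m| ≤ |u| := by
        rcases eq_or_ne m i with h | h
        · simp [he1, h]
        · simp [he1, Pi.single_eq_of_ne h, abs_nonneg]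
      have h2 : |e2 m| ≤ |v| := by
        rcases eq_or_ne m j with h | h
        · simp [he2, h]
        · simp [he2, Pi.single_eq_of_ne h, abs_nonneg]
      have h3 : |e3 m| ≤ |w| := by
        rcases eq_or_ne m l with h | h
        · simp [he3, h]
        · simp [he3, Pi.single_eq_of_ne h, abs_nonneg]
      calc |d m| ≤ |e1 m + e2 m| + |e3 m| := abs_add_le _ _
        _ ≤ |e1 m| + |e2 m| + |e3 m| := by
            have := abs_add_le (e1 m) (e2 m); linarith
        _ ≤ |u| + |v| + |w| := by linarith
    set M : ℝ := |u| + |v| + |w| + 1 with hM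
    have hMpos : 0 < M := by positivity
    set m₀ : ℝ := min (p i) (min (p j) (p l)) with hm₀
    have hm₀pos : 0 < m₀ := by
      simp only [hm₀, lt_min_iff]
      exact ⟨(hpos i).lt_of_ne (Ne.symm hi), (hpos j).lt_of_ne (Ne.symm hj),
        (hpos l).lt_of_ne (Ne.symm hl)⟩
    set ε : ℝ := m₀ / M with hε
    have hεpos : 0 < ε := div_pos hm₀pos hMpos
    have hkey : ∀ m, ε * |d m| ≤ p m ∨ d m = 0 := by
      intro m
      by_cases hm : m = i ∨ m = j ∨ m = l
      · left
        have hbd := hdbound m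
        have h1 : ε * |d m| ≤ ε * M := by
          apply mul_le_mul_of_nonneg_left _ hεpos.le
          linarith
        have h2 : ε * M = m₀ := by rw [hε, div_mul_cancel₀ m₀ hMpos.ne']
        have h3 : m₀ ≤ p m := by
          rcases hm with rfl | rfl | rfl
          · exact min_le_left _ _
          · exact le_trans (min_le_right _ _) (min_le_left _ _)
          · exact le_trans (min_le_right _ _) (min_le_right _ _)
        linarith
      · right
        push_neg at hm
        obtain ⟨h1, h2, h3⟩ := hm
        simp [hd, he1, he2, he3, Pi.single_eq_of_ne h1, Pi.single_eq_of_ne h2,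
          Pi.single_eq_of_ne h3]
    set a : Fin (k+1) → ℝ := fun m => p m + ε * d m with ha
    set b : Fin (k+1) → ℝ := fun m => p m - ε * d m with hb
    have hamem : (∀ m, 0 ≤ a m) ∧ (∑ m, a m = 1) ∧ (∑ m, x m * a m = α) := by
      refine ⟨?_, ?_, ?_⟩
      · intro m
        rcases hkey m with h | h
        · have := neg_abs_le (d m)
          have : -(ε * |d m|) ≤ ε * d m := by nlinarith [abs_nonneg (d m)]
          simp only [ha]; linarith
        · simp [ha, h, hpos m]
      · simp only [ha, Finset.sum_add_distrib, ← Finset.mul_sum, hdsum, hsum]; ring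
      · simp only [ha, mul_add]
        rw [Finset.sum_add_distrib, hmean]
        have : ∑ m, x m * (ε * d m) = ε * ∑ m, x m * d m := by
          rw [Finset.mul_sum]; congr 1; funext m; ring
        rw [this, hdx]; ring
    have hbmem : (∀ m, 0 ≤ b m) ∧ (∑ m, b m = 1) ∧ (∑ m, x m * b m = α) := by
      refine ⟨?_, ?_, ?_⟩
      · intro m
        rcases hkey m with h | h
        · have : ε * d m ≤ ε * |d m| := by nlinarith [le_abs_self (d m), abs_nonneg (d m)]
          simp only [hb]; linarith
        · simp [hb, h, hpos m]
      · simp only [hb, Finset.sum_sub_distrib, ← Finset.mul_sum, hdsum, hsum]; ring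
      · simp only [hb, mul_sub]
        rw [Finset.sum_sub_distrib, hmean]
        have : ∑ m, x m * (ε * d m) = ε * ∑ m, x m * d m := by
          rw [Finset.mul_sum]; congr 1; funext m; ring
        rw [this, hdx]; ring
    have hseg : p ∈ openSegment ℝ a b := by
      refine ⟨1/2, 1/2, by norm_num, by norm_num, by norm_num, ?_⟩
      funext m
      simp only [Pi.add_apply, Pi.smul_apply, smul_eq_mul, ha, hb]
      ring
    obtain ⟨hap, -⟩ := hext a hamem b hbmem hseg
    have := congrFun hap l
    simp only [ha, hdl] at this
    have : ε * w = 0 := by linarith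
    rcases mul_eq_zero.mp this with h | h
    · exact absurd h hεpos.ne'
    · exact hw h
  · -- at most 2 nonzero → extreme
    intro hcard
    refine ⟨⟨hpos, hsum, hmean⟩, ?_⟩
    rintro a ⟨hapos, hasum, hamean⟩ b ⟨hbpos, hbsum, hbmean⟩ ⟨t, s, ht, hs, hts, h⟩
    have hzero : ∀ m, p m = 0 → a m = 0 ∧ b m = 0 := by
      intro m hm
      have hcomb : t * a m + s * b m = 0 := by
        have := congrFun h m
        simp only [Pi.add_apply, Pi.smul_apply, smul_eq_mul] at this
        rw [this, hm]
      constructor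
      · by_contra hne
        have hpos' : 0 < a m := (hapos m).lt_of_ne (Ne.symm hne)
        nlinarith [mul_nonneg hs.le (hbpos m), mul_pos ht hpos']
      · by_contra hne
        have hpos' : 0 < b m := (hbpos m).lt_of_ne (Ne.symm hne)
        nlinarith [mul_nonneg ht.le (hapos m), mul_pos hs hpos']
    set S := Finset.univ.filter fun i => p i ≠ 0 with hS
    set d : Fin (k+1) → ℝ := fun m => a m - b m with hd
    have hdoff : ∀ m, m ∉ S → d m = 0 := by
      intro m hm
      simp only [hS, Finset.mem_filter, Finset.mem_univ, true_and, not_not] at hm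
      obtain ⟨h1, h2⟩ := hzero m hm
      simp [hd, h1, h2]
    have hdsum : ∑ m ∈ S, d m = 0 := by
      rw [Finset.sum_subset (Finset.subset_univ S) (fun m _ hm => hdoff m hm)]
      simp only [hd, Finset.sum_sub_distrib, hasum, hbsum, sub_self]
    have hdx : ∑ m ∈ S, x m * d m = 0 := by
      rw [Finset.sum_subset (Finset.subset_univ S)
        (fun m _ hm => by rw [hdoff m hm, mul_zero])]
      simp only [hd, mul_sub, Finset.sum_sub_distrib, hamean, hbmean, sub_self]
    have hd0 : ∀ m, d m = 0 := by
      intro m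
      by_cases hm : m ∈ S
      · rcases Nat.lt_or_ge S.card 2 with h2 | h2
        · have h1 : S.card = 1 := by
            have : 1 ≤ S.card := Finset.card_pos.mpr ⟨m, hm⟩
            omega
          obtain ⟨n, hn⟩ := Finset.card_eq_one.mp h1
          rw [hn] at hdsum hm
          simp only [Finset.mem_singleton] at hm
          rw [Finset.sum_singleton] at hdsum
          rw [hm]; exact hdsum
        · have h2' : S.card = 2 := le_antisymm hcard h2
          obtain ⟨n₁, n₂, hne, hSeq⟩ := Finset.card_eq_two.mp h2'
          rw [hSeq] at hdsum hdx hm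
          rw [Finset.sum_pair hne] at hdsum hdx
          have hxne : x n₁ - x n₂ ≠ 0 := sub_ne_zero.mpr (fun hh => hne (hx hh))
          have h1 : d n₁ = 0 := by
            have hmul : (x n₁ - x n₂) * d n₁ = 0 := by
              linear_combination hdx - x n₂ * hdsum
            rcases mul_eq_zero.mp hmul with hh | hh
            · exact absurd hh hxne
            · exact hh
          have h2'' : d n₂ = 0 := by linarith
          rcases Finset.mem_insert.mp hm with hh | hh
          · rw [hh]; exact h1
          · rw [Finset.mem_singleton.mp hh]; exact h2''
      · exact hdoff m hm
    have hab : a = b := funext fun m => sub_eq_zero.mp (hd0 m)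
    have hap : a = p := by
      rw [← h, hab]
      funext m
      simp only [Pi.add_apply, Pi.smul_apply, smul_eq_mul]
      linear_combination (-(b m)) * hts
    exact ⟨hap, hab ▸ hap⟩
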